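/- If σ:[n]→[n] is a permutation and P=(C_i)_{i=1}^k is an equitable k-partition of [n] with n>4k², then the partition matrix Q_{σ,P} is a weighted permutation. -/

import Mathlib

open MeasureTheory Filter Set

open scoped Classical

noncomputable section

/-- The number of occurrences of the pattern `τ` in the permutation `π`:
increasing tuples `x₁ < ... < x_k` such that `π` restricted to them has the
same relative order as `τ`. -/
def occCount {k n : ℕ} (τ : Equiv.Perm (Fin k)) (π : Equiv.Perm (Fin n)) : ℕ :=
  Set.ncard {x : Fin k → Fin n | StrictMono x ∧ ∀ i j : Fin k, π (x i) < π (x j) ↔ τ i < τ j}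

/-- The subpermutation density `t(τ, π)`. -/
def densP {k n : ℕ} (τ : Equiv.Perm (Fin k)) (π : Equiv.Perm (Fin n)) : ℝ :=
  if k ≤ n then (occCount τ π : ℝ) / (n.choose k : ℝ) else 0

/-- `F` is a cumulative distribution function on `[0,1]`: non-decreasing,
left-continuous, `F 0 = 0`, with values in `[0,1]`. -/
def IsCDF (F : ℝ → ℝ) : Prop :=
  MonotoneOn F (Set.Icc 0 1) ∧
    (∀ a ∈ Set.Ioc (0:ℝ) 1, Tendsto F (nhdsWithin a (Set.Iio a)) (nhds (F a))) ∧
    F 0 = 0 ∧ ∀ y ∈ Set.Icc (0:ℝ) 1, F y ∈ Set.Icc (0:ℝ) 1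

/-- `Z` is a limit permutation. -/
def LimitPerm (Z : ℝ → ℝ → ℝ) : Prop :=
  Measurable (fun p : Set.Icc (0:ℝ) 1 × Set.Icc (0:ℝ) 1 => Z (p.1 : ℝ) (p.2 : ℝ)) ∧
    (∀ x ∈ Set.Icc (0:ℝ) 1,
      IsCDF (Z x) ∧ Tendsto (Z x) (nhdsWithin 0 (Set.Ioi 0)) (nhds (Z x 0)) ∧ Z x 1 = 1) ∧
    ∀ y ∈ Set.Icc (0:ℝ) 1, (∫ x in Set.Icc (0:ℝ) 1, Z x y) = y

/-- `μ x` is the Lebesgue–Stieltjes probability measure of the cdf `Z x`, for each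
`x ∈ [0,1]`. -/
def LSFamily (Z : ℝ → ℝ → ℝ) (μ : ℝ → Measure ℝ) : Prop :=
  ∀ x ∈ Set.Icc (0:ℝ) 1,
    IsProbabilityMeasure (μ x) ∧ μ x (Set.Icc 0 1) = 1 ∧
      ∀ a b : ℝ, 0 ≤ a → a ≤ b → b ≤ 1 →
        μ x (Set.Ico a b) = ENNReal.ofReal (Z x b - Z x a)

/-- The set of increasing `m`-tuples `0 ≤ y₁ < y₂ < ... < y_m ≤ 1`. -/
def incSimplex (m : ℕ) : Set (Fin m → ℝ) :=
  {y | StrictMono y ∧ ∀ i, y i ∈ Set.Icc (0:ℝ) 1}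

/-- The core function `L_{τ,Z}` of a limit permutation, expressed through the
associated family `μ` of Lebesgue–Stieltjes measures: the product measure
`μ_{x_{τ⁻¹(1)}} × ... × μ_{x_{τ⁻¹(m)}}` of the simplex `{y₁ < ... < y_m}`. -/
def coreFn {m : ℕ} (τ : Equiv.Perm (Fin m)) (μ : ℝ → Measure ℝ) (x : Fin m → ℝ) : ℝ :=
  ((Measure.pi fun i => μ (x (τ.symm i))) (incSimplex m)).toReal

/-- The subpermutation density `t(τ, Z)` of `τ` in a limit permutation `Z`,
expressed through the associated family `μ` of Lebesgue–Stieltjes measures. -/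
def densL {m : ℕ} (τ : Equiv.Perm (Fin m)) (μ : ℝ → Measure ℝ) : ℝ :=
  (Nat.factorial m : ℝ) * ∫ x in incSimplex m, coreFn τ μ x

/-- The rectangular distance between two families of measures (coming from
functions `[0,1]² → [0,1]` whose sections are cdfs). -/
def rectDist (μ₁ μ₂ : ℝ → Measure ℝ) : ℝ :=
  sSup {d : ℝ | ∃ x₁ x₂ α₁ α₂ : ℝ,
    0 ≤ x₁ ∧ x₁ < x₂ ∧ x₂ ≤ 1 ∧ 0 ≤ α₁ ∧ α₁ < α₂ ∧ α₂ ≤ 1 ∧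
    d = |(∫ x in Set.Icc x₁ x₂, (μ₁ x (Set.Icc α₁ α₂)).toReal) -
          ∫ x in Set.Icc x₁ x₂, (μ₂ x (Set.Icc α₁ α₂)).toReal|}

/-- A weighted permutation of order `k`; entries are 0-based, so `Q i j`
stands for `Q(i+1, j+1)` in the 1-based notation. -/
def WeightedPerm {k : ℕ} (Q : Fin k → Fin k → ℝ) : Prop :=
  (∀ i j, Q i j ∈ Set.Icc (0:ℝ) 1) ∧ (∀ i, Monotone (Q i)) ∧
    ∀ j : Fin k, (j : ℝ) ≤ ∑ i, Q i j ∧ ∑ i, Q i j ≤ (j : ℝ) + 1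

/-- `Q` extended by the conventions `Q(i,0) = 0` and `Q(i,a) = 1` for `a ≥ k+1`;
the second argument `a : ℕ` is 1-based. -/
def Qext {k : ℕ} (Q : Fin k → Fin k → ℝ) (i : Fin k) (a : ℕ) : ℝ :=
  if h : 1 ≤ a ∧ a ≤ k then Q i ⟨a - 1, by omega⟩ else if a = 0 then 0 else 1

/-- The subpermutation density `t(τ, Q)` of `τ` in a weighted permutation `Q`. -/
def densW {m n : ℕ} (τ : Equiv.Perm (Fin m)) (Q : Fin n → Fin n → ℝ) : ℝ :=
  (n.choose m : ℝ)⁻¹ *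
    ∑ X ∈ Finset.univ.filter (fun X : Fin m → Fin n => StrictMono X),
      ∑ A ∈ Finset.univ.filter (fun A : Fin m → Fin (n + 1) => StrictMono A),
        ∏ i : Fin m, (Qext Q (X i) ((A (τ i) : ℕ) + 1) - Qext Q (X i) (A (τ i) : ℕ))

/-- The rectangular distance between two square matrices of order `n`
(in particular, weighted permutations): `a` and `b` range over `[n+1]`
(1-based) with `a < b`, and `S` over the subintervals of `[n]`. -/
def rectDistW {n : ℕ} (Q₁ Q₂ : Fin n → Fin n → ℝ) : ℝ :=
  sSup {d : ℝ | ∃ (lo hi : Fin n) (a b : ℕ), 1 ≤ a ∧ a < b ∧ b ≤ n + 1 ∧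
    d = (n : ℝ)⁻¹ * |∑ x ∈ Finset.Icc lo hi,
        ((Qext Q₁ x b - Qext Q₁ x a) - (Qext Q₂ x b - Qext Q₂ x a))|}

/-- The bipartite adjacency matrix `Q_σ` of the graph of a permutation:
`Q_σ(a,b) = 1` iff `σ(a) < b` (1-based). -/
def QofPerm {n : ℕ} (σ : Equiv.Perm (Fin n)) : Fin n → Fin n → ℝ :=
  fun i j => if (σ i : ℕ) < (j : ℕ) then 1 else 0

/-- The step function `Z_Q : [0,1]² → [0,1]` associated with a matrix `Q` of
order `n`: `Z_Q(x,y) = 0` if `y = 0`, `Z_Q(0,y) = ⌈ny⌉/n`, and otherwise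
`Z_Q(x,y) = Q(⌈nx⌉, ⌈ny⌉)` (1-based, with the conventions of `Qext`). -/
def stepW {n : ℕ} (Q : Fin n → Fin n → ℝ) : ℝ → ℝ → ℝ := fun x y =>
  if y = 0 then 0
  else if x = 0 then ((⌈(n : ℝ) * y⌉ : ℤ) : ℝ) / (n : ℝ)
  else if h : ∃ i : Fin n, ((i : ℕ) + 1 : ℤ) = ⌈(n : ℝ) * x⌉ then
    Qext Q h.choose (⌈(n : ℝ) * y⌉).toNat
  else 0

/-- The family of Lebesgue–Stieltjes measures of the step function `Z_Q`:
for `x` with `⌈nx⌉ = i ∈ [n]`, the cdf `Z_Q(x,·)` is a step function whose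
Lebesgue–Stieltjes measure places mass `Q(i,j+1) - Q(i,j)` at the point `j/n`
for `0 ≤ j ≤ n`. -/
def stepWMeasures {n : ℕ} (Q : Fin n → Fin n → ℝ) : ℝ → Measure ℝ := fun x =>
  if h : ∃ i : Fin n, ((i : ℕ) + 1 : ℤ) = ⌈(n : ℝ) * x⌉ then
    ∑ j : Fin (n + 1),
      ENNReal.ofReal (Qext Q h.choose ((j : ℕ) + 1) - Qext Q h.choose (j : ℕ)) •
        Measure.dirac ((j : ℝ) / (n : ℝ))
  else Measure.dirac 0

/-- The step function `Z_σ` of a permutation `σ`. -/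
def stepFun {n : ℕ} (σ : Equiv.Perm (Fin n)) : ℝ → ℝ → ℝ := stepW (QofPerm σ)

/-- The family of Lebesgue–Stieltjes measures of the step function `Z_σ`. -/
def stepMeasures {n : ℕ} (σ : Equiv.Perm (Fin n)) : ℝ → Measure ℝ :=
  stepWMeasures (QofPerm σ)

/-- The joint law of `((X₁,...,Xₙ), (a₁,...,aₙ))`, where the `Xᵢ` are i.i.d.
uniform on `[0,1]` and, conditionally on the `Xᵢ`, the `aᵢ` are independent
with `aᵢ` distributed according to `μ (Xᵢ)`. -/
def jointMeasure (μ : ℝ → Measure ℝ) (n : ℕ) : Measure ((Fin n → ℝ) × (Fin n → ℝ)) :=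
  (Measure.pi fun _ : Fin n => volume.restrict (Set.Icc (0:ℝ) 1)).bind fun X =>
    (Measure.pi fun i => μ (X i)).map fun a => (X, a)

/-- The (1-based) rank of `v i` among `v 1, ..., v n`. -/
def rankOf {n : ℕ} (v : Fin n → ℝ) (i : Fin n) : ℕ :=
  (Finset.univ.filter fun j => v j ≤ v i).card

/-- `π` is the permutation `S ∘ R⁻¹` determined by the sample
`ω = ((X₁,...,Xₙ), (a₁,...,aₙ))`, where `R` and `S` are the rank functions
of the `Xᵢ` and the `aᵢ`. -/
def IsSamplePerm {n : ℕ} (ω : (Fin n → ℝ) × (Fin n → ℝ)) (π : Equiv.Perm (Fin n)) : Prop :=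
  ∀ i p q : Fin n, rankOf ω.1 i = (p : ℕ) + 1 → rankOf ω.2 i = (q : ℕ) + 1 → π p = q

/-- The `Z`-random permutation determined by the sample `ω`; it is well defined
(the witness is unique) off a null set. -/
def samplePerm {n : ℕ} (ω : (Fin n → ℝ) × (Fin n → ℝ)) : Equiv.Perm (Fin n) :=
  if h : ∃! π : Equiv.Perm (Fin n), IsSamplePerm ω π then h.choose else 1

/-- The subinterval `{lo+1, ..., hi}` of `[n]` (as a finset of 0-based indices
`x` with `lo ≤ x < hi`). -/
def intervalFin (n : ℕ) (lo hi : ℕ) : Finset (Fin n) :=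
  Finset.univ.filter fun x => lo ≤ (x : ℕ) ∧ (x : ℕ) < hi

/-- `c : Fin (k+1) → ℕ` is the sequence of cut points of an equitable
`k`-partition of `[n]` into consecutive intervals `C_i = {c i + 1, ..., c (i+1)}`. -/
def IsEquipartition {k : ℕ} (n : ℕ) (c : Fin (k + 1) → ℕ) : Prop :=
  Monotone c ∧ c 0 = 0 ∧ c (Fin.last k) = n ∧
    ∀ i j : Fin k, ((intervalFin n (c i.castSucc) (c i.succ)).card : ℤ) -
      ((intervalFin n (c j.castSucc) (c j.succ)).card : ℤ) ≤ 1

/-- The number of edges of the graph `G_σ` between `A` and `B`: pairs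
`(a,b) ∈ A × B` with `σ(a) < b` (1-based). -/
def edgeCount {n : ℕ} (σ : Equiv.Perm (Fin n)) (A B : Finset (Fin n)) : ℕ :=
  ((A ×ˢ B).filter fun p => (σ p.1 : ℕ) < (p.2 : ℕ)).card

/-- The partition matrix `Q_{σ,P}` of `σ` induced by the partition with cut
points `c`. -/
def partMatrix {n k : ℕ} (σ : Equiv.Perm (Fin n)) (c : Fin (k + 1) → ℕ) :
    Fin k → Fin k → ℝ := fun u w =>
  (edgeCount σ (intervalFin n (c u.castSucc) (c u.succ))
      (intervalFin n (c w.castSucc) (c w.succ)) : ℝ) /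
    (((intervalFin n (c u.castSucc) (c u.succ)).card : ℝ) *
      ((intervalFin n (c w.castSucc) (c w.succ)).card : ℝ))

/-- The blow-up matrix `K(P,Q) : [n]² → [0,1]` of the matrix `Q : [k]² → [0,1]`
with respect to the partition with cut points `c`. -/
def blowup {n k : ℕ} (c : Fin (k + 1) → ℕ) (Q : Fin k → Fin k → ℝ) :
    Fin n → Fin n → ℝ := fun x y =>
  if hx : ∃ i : Fin k, c i.castSucc ≤ (x : ℕ) ∧ (x : ℕ) < c i.succ then
    if hy : ∃ j : Fin k, c j.castSucc ≤ (y : ℕ) ∧ (y : ℕ) < c j.succ then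
      Q hx.choose hy.choose
    else 0
  else 0

/-- The right limit `lim_{α' → α⁺} F(α')` of a (monotone) cdf `F` on `[0,1]`,
with the convention that the limit at `α = 1` is `1`. -/
def cdfRightLim (F : ℝ → ℝ) (α : ℝ) : ℝ :=
  if α = 1 then 1 else sInf (F '' Set.Ioc α 1)

/-- The cdf `F` is discontinuous at `α`: `lim_{α' → α⁺} F(α') > F(α)`. -/
def cdfDiscontAt (F : ℝ → ℝ) (α : ℝ) : Prop :=
  F α < cdfRightLim F α

/-- the partition matrix of a permutation with respect to an
equitable `k`-partition of `[n]`, `n > 4k²`, is a weighted permutation. -/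
lemma image_intervalFin {n lo hi : ℕ} (h2 : hi ≤ n) :
    (intervalFin n lo hi).image Fin.val = Finset.Ico lo hi := by
  ext x
  simp only [Finset.mem_image, Finset.mem_Ico, intervalFin, Finset.mem_filter,
    Finset.mem_univ, true_and]
  constructor
  · rintro ⟨a, ⟨h1, h3⟩, rfl⟩; exact ⟨h1, h3⟩
  · rintro ⟨h1, h3⟩; exact ⟨⟨x, lt_of_lt_of_le h3 h2⟩, ⟨h1, h3⟩, rfl⟩

lemma card_intervalFin {n lo hi : ℕ} (h2 : hi ≤ n) :
    (intervalFin n lo hi).card = hi - lo := by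
  rw [← Finset.card_image_of_injective _ (Fin.val_injective), image_intervalFin h2,
    Nat.card_Ico]

lemma sum_val_intervalFin {n lo hi : ℕ} (h2 : hi ≤ n) :
    ∑ a ∈ intervalFin n lo hi, (a : ℕ) = ∑ j ∈ Finset.Ico lo hi, j := by
  rw [← image_intervalFin h2, Finset.sum_image]
  intro a _ b _ h; exact Fin.val_injective h

theorem partMatrix_is_weightedPerm {n k : ℕ} (σ : Equiv.Perm (Fin n))
    (c : Fin (k + 1) → ℕ) (hpart : IsEquipartition n c) (hn : 4 * k ^ 2 < n) :
    WeightedPerm (partMatrix σ c) := by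
  classical
  obtain ⟨hmono, hc0, hclast, heq⟩ := hpart
  rcases Nat.eq_zero_or_pos k with hk0 | hkpos
  · subst hk0
    exact ⟨fun i => i.elim0, fun i => i.elim0, fun j => j.elim0⟩
  have hcn : ∀ i : Fin (k + 1), c i ≤ n := by
    intro i; rw [← hclast]; exact hmono (Fin.le_last i)
  have hcle : ∀ i : Fin k, c i.castSucc ≤ c i.succ :=
    fun i => hmono (i.castSucc_le_succ)
  set C : Fin k → Finset (Fin n) :=
    fun i => intervalFin n (c i.castSucc) (c i.succ) with hCdef
  have hcard : ∀ i : Fin k, (C i).card = c i.succ - c i.castSucc :=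
    fun i => card_intervalFin (hcn i.succ)
  have hsize : ∀ i j : Fin k, (C i).card ≤ (C j).card + 1 := by
    intro i j; have h := heq i j
    simp only [hCdef]; omega
  have hcsum : ∀ i : Fin (k + 1), c i = ∑ j ∈ Finset.range i.val,
      (if h : j < k then (C ⟨j, h⟩).card else 0) := by
    intro i
    induction i using Fin.induction with
    | zero => simpa using hc0
    | succ i ih =>
      have hv : (i.succ : Fin (k+1)).val = i.val + 1 := rfl
      rw [Fin.coe_castSucc] at ih
      rw [hv, Finset.sum_range_succ, ← ih]
      have hmk : (⟨i.val, i.isLt⟩ : Fin k) = i := rfl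
      rw [dif_pos i.isLt]
      have h2 := hcle i
      have h3 := hcard i
      simp only [hmk] at *
      omega
  have hn_sum : n = ∑ j ∈ Finset.range k, (if h : j < k then (C ⟨j, h⟩).card else 0) := by
    have := hcsum (Fin.last k)
    rw [hclast] at this; exact this
  have hbig : ∀ w : Fin k, 4 * k ≤ (C w).card := by
    intro w
    have hub : ∀ j ∈ Finset.range k,
        (if h : j < k then (C ⟨j, h⟩).card else 0) ≤ (C w).card + 1 := by
      intro j hj
      rw [dif_pos (Finset.mem_range.1 hj)]
      exact hsize _ _
    have h1 := Finset.sum_le_card_nsmul _ _ _ hub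
    rw [← hn_sum, Finset.card_range, smul_eq_mul] at h1
    by_contra hlt
    push_neg at hlt
    have h2 : n ≤ k * (4 * k) := le_trans h1 (Nat.mul_le_mul_left _ (by omega))
    nlinarith
  have hCpos : ∀ w : Fin k, 0 < (C w).card := fun w => lt_of_lt_of_le (by omega) (hbig w)
  have hCposR : ∀ w : Fin k, (0:ℝ) < ((C w).card : ℝ) := fun w => by
    exact_mod_cast hCpos w
  have hLb : ∀ w : Fin k, w.val * ((C w).card - 1) ≤ c w.castSucc ∧
      c w.castSucc ≤ w.val * ((C w).card + 1) := by
    intro w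
    have hv : (w.castSucc : Fin (k+1)).val = w.val := rfl
    rw [hcsum w.castSucc, hv]
    constructor
    · have hlb : ∀ j ∈ Finset.range w.val,
          (C w).card - 1 ≤ (if h : j < k then (C ⟨j, h⟩).card else 0) := by
        intro j hj
        have hjk : j < k := lt_trans (Finset.mem_range.1 hj) w.isLt
        rw [dif_pos hjk]
        have := hsize w ⟨j, hjk⟩; omega
      have h1 := Finset.card_nsmul_le_sum _ _ _ hlb
      rwa [Finset.card_range, smul_eq_mul] at h1
    · have hub : ∀ j ∈ Finset.range w.val,
          (if h : j < k then (C ⟨j, h⟩).card else 0) ≤ (C w).card + 1 := by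
        intro j hj
        have hjk : j < k := lt_trans (Finset.mem_range.1 hj) w.isLt
        rw [dif_pos hjk]
        exact hsize _ _
      have h1 := Finset.sum_le_card_nsmul _ _ _ hub
      rwa [Finset.card_range, smul_eq_mul] at h1
  have hedge : ∀ (A B : Finset (Fin n)), edgeCount σ A B =
      ∑ a ∈ A, ((B.filter fun b : Fin n => (σ a : ℕ) < (b : ℕ)).card) := by
    intro A B
    rw [edgeCount, Finset.card_filter, Finset.sum_product]
    refine Finset.sum_congr rfl fun a _ => ?_
    rw [Finset.card_filter]
  have hedge_le : ∀ (A B : Finset (Fin n)), edgeCount σ A B ≤ A.card * B.card := by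
    intro A B
    calc edgeCount σ A B ≤ (A ×ˢ B).card := Finset.card_filter_le _ _
      _ = A.card * B.card := Finset.card_product _ _
  have hexu : ∀ x : ℕ, x < n → ∃ u : Fin k, c u.castSucc ≤ x ∧ x < c u.succ := by
    intro x hx
    have H : ∀ t : ℕ, ∀ ht : t ≤ k, x < c ⟨t, by omega⟩ →
        ∃ u : Fin k, c u.castSucc ≤ x ∧ x < c u.succ := by
      intro t
      induction t with
      | zero =>
        intro ht hlt
        have h0 : (⟨0, by omega⟩ : Fin (k+1)) = 0 := rfl
        rw [h0, hc0] at hlt; omega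
      | succ t ih =>
        intro ht hlt
        by_cases hle : c (⟨t, by omega⟩ : Fin (k + 1)) ≤ x
        · exact ⟨⟨t, by omega⟩, hle, hlt⟩
        · exact ih (by omega) (by omega)
    have hxn : x < c ⟨k, by omega⟩ := by
      have hl : (⟨k, by omega⟩ : Fin (k+1)) = Fin.last k := rfl
      rw [hl, hclast]; exact hx
    exact H k le_rfl hxn
  have huniq : ∀ (x : ℕ) (u v : Fin k), (c u.castSucc ≤ x ∧ x < c u.succ) →
      (c v.castSucc ≤ x ∧ x < c v.succ) → u = v := by
    intro x u v hu hv
    by_contra hne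
    rcases lt_trichotomy u.val v.val with h | h | h
    · have : c u.succ ≤ c v.castSucc := by
        apply hmono
        rw [Fin.le_def, Fin.val_succ, Fin.coe_castSucc]
        exact Nat.succ_le_of_lt h
      omega
    · exact hne (Fin.ext h)
    · have : c v.succ ≤ c u.castSucc := by
        apply hmono
        rw [Fin.le_def, Fin.val_succ, Fin.coe_castSucc]
        exact Nat.succ_le_of_lt h
      omega
  have hpartsum : ∀ f : Fin n → ℕ, ∑ u : Fin k, ∑ a ∈ C u, f a = ∑ a, f a := by
    intro f
    have hrw : ∀ u : Fin k, ∑ a ∈ C u, f a =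
        ∑ a : Fin n, if c u.castSucc ≤ (a : ℕ) ∧ (a : ℕ) < c u.succ then f a else 0 := by
      intro u
      rw [hCdef]
      exact Finset.sum_filter _ _
    simp only [hrw]
    rw [Finset.sum_comm]
    refine Finset.sum_congr rfl fun a _ => ?_
    obtain ⟨u0, hu0⟩ := hexu a a.isLt
    rw [Finset.sum_eq_single u0]
    · rw [if_pos hu0]
    · intro u _ hne
      rw [if_neg]
      intro hmem
      exact hne (huniq a u u0 hmem hu0)
    · intro h; exact absurd (Finset.mem_univ u0) h
  have hcol : ∀ w : Fin k, ∑ u : Fin k, edgeCount σ (C u) (C w) = ∑ b ∈ C w, (b : ℕ) := by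
    intro w
    simp only [hedge]
    rw [hpartsum (fun a => ((C w).filter fun b : Fin n => (σ a : ℕ) < (b : ℕ)).card)]
    have hcf : ∀ a : Fin n, ((C w).filter fun b : Fin n => (σ a : ℕ) < (b : ℕ)).card
        = ∑ b ∈ C w, if (σ a : ℕ) < (b : ℕ) then 1 else 0 := fun a => by
      rw [Finset.card_filter]
    simp only [hcf]
    rw [Finset.sum_comm]
    refine Finset.sum_congr rfl fun b _ => ?_
    rw [← Finset.card_filter]
    have h1 : (Finset.univ.filter fun a : Fin n => (σ a : ℕ) < (b : ℕ)).card =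
        (Finset.univ.filter fun t : Fin n => (t : ℕ) < (b : ℕ)).card := by
      apply Finset.card_bij (fun a _ => σ a)
      · intro a ha; simp only [Finset.mem_filter, Finset.mem_univ, true_and] at *; exact ha
      · intro a _ a' _ h; exact σ.injective h
      · intro t ht
        refine ⟨σ.symm t, ?_, by simp⟩
        simp only [Finset.mem_filter, Finset.mem_univ, true_and] at *
        simpa using ht
    rw [h1]
    have h2 : (Finset.univ.filter fun t : Fin n => (t : ℕ) < (b : ℕ)) = intervalFin n 0 b := by
      simp [intervalFin]
    rw [h2, card_intervalFin (le_of_lt b.isLt)]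
    omega
  have hcolval : ∀ w : Fin k, 2 * (∑ u : Fin k, edgeCount σ (C u) (C w)) =
      2 * (C w).card * c w.castSucc + (C w).card * ((C w).card - 1) := by
    intro w
    rw [hcol w]
    have hsum : ∑ b ∈ C w, (b : ℕ) = ∑ j ∈ Finset.Ico (c w.castSucc) (c w.succ), j := by
      rw [hCdef]; exact sum_val_intervalFin (hcn w.succ)
    rw [hsum, Finset.sum_Ico_eq_sum_range]
    have hc' : c w.succ - c w.castSucc = (C w).card := (hcard w).symm
    rw [hc']
    rw [Finset.sum_add_distrib, Finset.sum_const, Finset.card_range, smul_eq_mul]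
    rw [Nat.mul_add, ← Finset.sum_range_id_mul_two ((C w).card)]
    ring
  have hmono_pt : ∀ (w w' : Fin k), w < w' → ∀ t : ℕ,
      ((C w).filter fun b : Fin n => t < (b : ℕ)).card * (C w').card ≤
      ((C w').filter fun b : Fin n => t < (b : ℕ)).card * (C w).card := by
    intro w w' hww t
    by_cases hlt : t < c w'.castSucc
    · have hfull : ((C w').filter fun b : Fin n => t < (b : ℕ)) = C w' := by
        apply Finset.filter_true_of_mem
        intro b hb
        simp only [hCdef, intervalFin, Finset.mem_filter, Finset.mem_univ, true_and] at hb
        omega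
      rw [hfull, mul_comm ((C w').card) ((C w).card)]
      exact Nat.mul_le_mul_right _ (Finset.card_filter_le _ _)
    · have hsep : c w.succ ≤ c w'.castSucc := by
        apply hmono
        rw [Fin.le_def, Fin.val_succ, Fin.coe_castSucc]
        exact Nat.succ_le_of_lt (Fin.lt_def.1 hww)
      have hempty : ((C w).filter fun b : Fin n => t < (b : ℕ)) = ∅ := by
        apply Finset.filter_false_of_mem
        intro b hb
        simp only [hCdef, intervalFin, Finset.mem_filter, Finset.mem_univ, true_and] at hb
        omega
      simp [hempty]
  refine ⟨?_, ?_, ?_⟩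
  · -- entries in [0,1]
    intro u w
    simp only [Set.mem_Icc, partMatrix]
    constructor
    · exact div_nonneg (Nat.cast_nonneg _) (mul_nonneg (Nat.cast_nonneg _) (Nat.cast_nonneg _))
    · rw [div_le_one (mul_pos (hCposR u) (hCposR w))]
      exact_mod_cast hedge_le (C u) (C w)
  · -- monotone rows
    intro u w w' hle
    rcases eq_or_lt_of_le hle with rfl | hlt
    · exact le_rfl
    · simp only [partMatrix]
      rw [div_le_div_iff₀ (mul_pos (hCposR u) (hCposR w)) (mul_pos (hCposR u) (hCposR w'))]
      have key : edgeCount σ (C u) (C w) * (C w').card ≤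
          edgeCount σ (C u) (C w') * (C w).card := by
        rw [hedge, hedge, Finset.sum_mul, Finset.sum_mul]
        exact Finset.sum_le_sum fun a _ => hmono_pt w w' hlt (σ a)
      have keyR : ((edgeCount σ (C u) (C w) * (C w').card : ℕ) : ℝ) ≤
          ((edgeCount σ (C u) (C w') * (C w).card : ℕ) : ℝ) := by exact_mod_cast key
      push_cast at keyR
      have h2 := mul_le_mul_of_nonneg_right keyR (hCposR u).le
      nlinarith [h2]
  · -- column sums
    intro w
    set s : ℕ := (C w).card with hs
    set L : ℕ := c w.castSucc with hL
    set E : ℕ := ∑ u : Fin k, edgeCount σ (C u) (C w) with hEdef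
    have hsw : 4 * k ≤ s := hbig w
    have hwk : w.val < k := w.isLt
    have hLlb : w.val * (s - 1) ≤ L := (hLb w).1
    have hLub : L ≤ w.val * (s + 1) := (hLb w).2
    have hE : 2 * E = 2 * s * L + s * (s - 1) := hcolval w
    have hcw : ((C w).card : ℝ) = (s:ℝ) := by rw [hs]
    clear_value s L E
    have hs1 : 1 ≤ s := by omega
    -- real versions
    have hsR : (4:ℝ) * k ≤ (s:ℝ) := by exact_mod_cast hsw
    have hwR0 : (0:ℝ) ≤ (w.val:ℝ) := Nat.cast_nonneg _
    have hsR1 : (1:ℝ) ≤ (s:ℝ) := by exact_mod_cast hs1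
    have hspos : (0:ℝ) < (s:ℝ) := by linarith
    have hEZ := hE
    zify [hs1] at hEZ
    have hER : 2 * (E:ℝ) = 2 * (s:ℝ) * L + s * ((s:ℝ) - 1) := by exact_mod_cast hEZ
    have hLlbZ := hLlb
    zify [hs1] at hLlbZ
    have hLlbR : (w.val : ℝ) * ((s:ℝ) - 1) ≤ (L:ℝ) := by exact_mod_cast hLlbZ
    have hLubR : (L:ℝ) ≤ (w.val:ℝ) * ((s:ℝ) + 1) := by exact_mod_cast hLub
    have hs4 : (4:ℝ) * (w.val:ℝ) + 4 ≤ (s:ℝ) := by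
      have h5 : (w.val:ℝ) + 1 ≤ k := by exact_mod_cast hwk
      linarith
    have hsub : ∀ u : Fin k, (s:ℝ) - 1 ≤ ((C u).card : ℝ) ∧ ((C u).card : ℝ) ≤ (s:ℝ) + 1 := by
      intro u
      have h1 := hsize w u
      have h2 := hsize u w
      rw [← hs] at h1 h2
      constructor
      · have h3 : (s:ℝ) ≤ ((C u).card : ℝ) + 1 := by exact_mod_cast h1
        linarith
      · exact_mod_cast h2
    have hlow : ∀ u : Fin k, (edgeCount σ (C u) (C w) : ℝ) / (((s:ℝ) + 1) * s) ≤
        partMatrix σ c u w := by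
      intro u
      simp only [partMatrix]
      rw [div_le_div_iff₀ (mul_pos (by positivity) hspos) (mul_pos (hCposR u) (hCposR w))]
      have h1 : ((C u).card : ℝ) * ((C w).card : ℝ) ≤ ((s:ℝ) + 1) * s := by
        rw [hcw]
        exact mul_le_mul_of_nonneg_right (hsub u).2 hspos.le
      exact mul_le_mul_of_nonneg_left h1 (Nat.cast_nonneg _)
    have hup1 : (0:ℝ) < ((s:ℝ) - 1) * s := by nlinarith
    have hup : ∀ u : Fin k, partMatrix σ c u w ≤
        (edgeCount σ (C u) (C w) : ℝ) / (((s:ℝ) - 1) * s) := by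
      intro u
      simp only [partMatrix]
      rw [div_le_div_iff₀ (mul_pos (hCposR u) (hCposR w)) hup1]
      have h1 : ((s:ℝ) - 1) * s ≤ ((C u).card : ℝ) * ((C w).card : ℝ) := by
        rw [hcw]
        exact mul_le_mul_of_nonneg_right (hsub u).1 hspos.le
      exact mul_le_mul_of_nonneg_left h1 (Nat.cast_nonneg _)
    have hsumE : ∑ u : Fin k, (edgeCount σ (C u) (C w) : ℝ) = (E:ℝ) := by
      rw [hEdef]
      push_cast
      ring
    constructor
    · have h1 : (E:ℝ) / (((s:ℝ) + 1) * s) ≤ ∑ u, partMatrix σ c u w := by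
        rw [← hsumE, Finset.sum_div]
        exact Finset.sum_le_sum fun u _ => hlow u
      refine le_trans ?_ h1
      rw [le_div_iff₀ (mul_pos (by positivity) hspos)]
      have hint1 := mul_le_mul_of_nonneg_left hLlbR (by linarith : (0:ℝ) ≤ 2 * (s:ℝ))
      have hint2 := mul_nonneg hspos.le (by linarith : (0:ℝ) ≤ (s:ℝ) - 1 - 4 * (w.val:ℝ))
      nlinarith [hint1, hint2, hER]
    · have h1 : ∑ u, partMatrix σ c u w ≤ (E:ℝ) / (((s:ℝ) - 1) * s) := by
        rw [← hsumE, Finset.sum_div]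
        exact Finset.sum_le_sum fun u _ => hup u
      refine le_trans h1 ?_
      rw [div_le_iff₀ hup1]
      have hint1 := mul_le_mul_of_nonneg_left hLubR (by linarith : (0:ℝ) ≤ 2 * (s:ℝ))
      have hint2 := mul_nonneg hspos.le (by linarith : (0:ℝ) ≤ (s:ℝ) - 1 - 4 * (w.val:ℝ))
      linarith only [hint1, hint2, hER, hspos, hsR1, hwR0]

end
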